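/- Under the ho-MCAR assumption (P ∼ Bernoulli(ρ)^{⊗d} independent of (X,Y)) with ℓ² ≤ E[X_j²] ≤ L² for all j, the zero-imputation bias B_imp = inf_θ R_imp(θ) − inf_θ R(θ) satisfies B_ridge,λ' ≤ B_imp ≤ B_ridge,λ, where λ' = ℓ²(1−ρ)/ρ, λ = L²(1−ρ)/ρ, and B_ridge,λ = inf_θ { R(θ) + λ‖θ‖₂² } − inf_θ R(θ). -/

import Mathlib

open MeasureTheory ProbabilityTheory

lemma int_mul_L2 {Ω : Type*} {mΩ : MeasurableSpace Ω} {μ : Measure Ω} {f g : Ω → ℝ}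
    (hf : MemLp f 2 μ) (hg : MemLp g 2 μ) : Integrable (fun ω => f ω * g ω) μ := by
  have h : MemLp (g • f) 1 μ :=
    hf.smul hg
  rw [memLp_one_iff_integrable] at h
  simpa [smul_eq_mul, mul_comm, Pi.mul_def] using h

lemma key_aux {Ω : Type*} {mΩ : MeasurableSpace Ω} (μ : Measure Ω) [IsProbabilityMeasure μ]
    {d : ℕ} (X : Ω → Fin d → ℝ) (Y : Ω → ℝ) (P : Ω → Fin d → ℝ)
    (hXm : Measurable X) (hYm : Measurable Y) (hPm : Measurable P)
    (hX2 : ∀ j, MemLp (fun ω => X ω j) 2 μ) (hY2 : MemLp Y 2 μ)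
    (hP01 : ∀ ω j, P ω j = 0 ∨ P ω j = 1)
    (ρ : ℝ) (hρpos : 0 < ρ) (hρlt : ρ < 1)
    (hρ : ∀ j, (μ {ω | P ω j = 1}).toReal = ρ)
    (hiid : iIndepFun (fun j ω => P ω j) μ)
    (hMCAR : IndepFun (fun ω => (X ω, Y ω)) P μ)
    (θ : Fin d → ℝ) :
    ∫ ω, (Y ω - ∑ j, θ j * (P ω j * X ω j)) ^ 2 ∂μ
      = (∫ ω, (Y ω - ∑ j, (ρ * θ j) * X ω j) ^ 2 ∂μ)
        + ρ * (1 - ρ) * ∑ j, θ j ^ 2 * ∫ ω, X ω j ^ 2 ∂μ := by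
  classical
  set A : Ω → ℝ := fun ω => Y ω - ∑ k, (ρ * θ k) * X ω k with hA
  set B : Ω → ℝ := fun ω => ∑ k, θ k * ((P ω k - ρ) * X ω k) with hB
  have hXjm : ∀ j, Measurable fun ω => X ω j := fun j => (measurable_pi_apply j).comp hXm
  have hPjm : ∀ j, Measurable fun ω => P ω j := fun j => (measurable_pi_apply j).comp hPm
  have hPjbd : ∀ j ω, ‖P ω j - ρ‖ ≤ 1 := by
    intro j ω
    rcases hP01 ω j with h | h <;> rw [h, Real.norm_eq_abs, abs_le] <;> constructor <;> linarith
  have hPjint : ∀ j, Integrable (fun ω => P ω j) μ := by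
    intro j
    refine Integrable.mono' (integrable_const 1) (hPjm j).aestronglyMeasurable ?_
    filter_upwards with ω
    rcases hP01 ω j with h | h <;> rw [h] <;> norm_num
  -- E[P_j] = ρ
  have hEP : ∀ j, ∫ ω, P ω j ∂μ = ρ := by
    intro j
    have hs : MeasurableSet {ω | P ω j = 1} := (hPjm j) (measurableSet_singleton 1)
    have heq : (fun ω => P ω j) = Set.indicator {ω | P ω j = 1} (fun _ => (1 : ℝ)) := by
      funext ω
      rcases hP01 ω j with h | h <;>
        simp [Set.indicator_apply, Set.mem_setOf_eq, h]
    rw [heq, integral_indicator_const _ hs, smul_eq_mul, mul_one, measureReal_def, hρ j]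
  -- E[P_j - ρ] = 0
  have hEQ : ∀ j, ∫ ω, (P ω j - ρ) ∂μ = 0 := by
    intro j
    rw [integral_sub (hPjint j) (integrable_const ρ), hEP j, integral_const]
    simp
  -- E[(P_i-ρ)(P_j-ρ)] = 0 for i ≠ j
  have hEQQ : ∀ i j, i ≠ j → ∫ ω, (P ω i - ρ) * (P ω j - ρ) ∂μ = 0 := by
    intro i j hij
    have hind : IndepFun (fun ω => P ω i) (fun ω => P ω j) μ := hiid.indepFun hij
    have hind2 : IndepFun (fun ω => P ω i - ρ) (fun ω => P ω j - ρ) μ :=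
      hind.comp (measurable_id.sub_const ρ) (measurable_id.sub_const ρ)
    have := hind2.integral_fun_mul_eq_mul_integral
      ((hPjm i).sub_const ρ).aestronglyMeasurable ((hPjm j).sub_const ρ).aestronglyMeasurable
    rw [this, hEQ i, hEQ j, mul_zero]
  -- E[(P_j-ρ)^2] = ρ(1-ρ)
  have hEQ2 : ∀ j, ∫ ω, (P ω j - ρ) ^ 2 ∂μ = ρ * (1 - ρ) := by
    intro j
    have heq : (fun ω => (P ω j - ρ) ^ 2) = fun ω => (1 - 2 * ρ) * P ω j + ρ ^ 2 := by
      funext ω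
      rcases hP01 ω j with h | h <;> rw [h] <;> ring
    rw [heq, integral_add ((hPjint j).const_mul _) (integrable_const _),
      integral_const_mul, hEP j, integral_const]
    simp only [probReal_univ, measure_univ, ENNReal.toReal_one, smul_eq_mul, one_mul]
    ring
  -- splitting of expectations via independence
  have hsplit : ∀ (f : (Fin d → ℝ) × ℝ → ℝ) (g : (Fin d → ℝ) → ℝ),
      Measurable f → Measurable g →
      ∫ ω, f (X ω, Y ω) * g (P ω) ∂μ = (∫ ω, f (X ω, Y ω) ∂μ) * ∫ ω, g (P ω) ∂μ := by
    intro f g hf hg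
    exact (hMCAR.comp hf hg).integral_fun_mul_eq_mul_integral
      (hf.comp (hXm.prodMk hYm)).aestronglyMeasurable (hg.comp hPm).aestronglyMeasurable
  -- integrability
  have hsumL2 : MemLp (fun ω => ∑ k, (ρ * θ k) * X ω k) 2 μ :=
    memLp_finset_sum Finset.univ (fun k _ => (hX2 k).const_mul _)
  have hA2 : MemLp A 2 μ := hY2.sub hsumL2
  have intA2 : Integrable (fun ω => A ω ^ 2) μ := hA2.integrable_sq
  have hAXQint : ∀ j, Integrable (fun ω => (A ω * X ω j) * (P ω j - ρ)) μ := by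
    intro j
    have h1 : Integrable (fun ω => A ω * X ω j) μ := int_mul_L2 hA2 (hX2 j)
    have h2 : Integrable (fun ω => (P ω j - ρ) * (A ω * X ω j)) μ :=
      h1.bdd_mul ((hPjm j).sub_const ρ).aestronglyMeasurable (c := 1) (Filter.Eventually.of_forall fun ω => hPjbd j ω)
    simpa [mul_comm] using h2
  have hXXQQint : ∀ i j, Integrable
      (fun ω => (θ i * θ j) * ((X ω i * X ω j) * ((P ω i - ρ) * (P ω j - ρ)))) μ := by
    intro i j
    have h1 : Integrable (fun ω => X ω i * X ω j) μ := int_mul_L2 (hX2 i) (hX2 j)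
    have h2 : Integrable (fun ω => ((P ω i - ρ) * (P ω j - ρ)) * (X ω i * X ω j)) μ := by
      refine h1.bdd_mul (((hPjm i).sub_const ρ).mul ((hPjm j).sub_const ρ)).aestronglyMeasurable
        (c := 1) (Filter.Eventually.of_forall fun ω => ?_)
      rw [norm_mul]
      calc ‖P ω i - ρ‖ * ‖P ω j - ρ‖ ≤ 1 * 1 :=
            mul_le_mul (hPjbd i ω) (hPjbd j ω) (norm_nonneg _) zero_le_one
        _ = 1 := one_mul 1
    have h3 := h2.const_mul (θ i * θ j)
    refine h3.congr (Filter.Eventually.of_forall fun ω => ?_)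
    ring
  -- pointwise expansions
  have hABsum : (fun ω => A ω * B ω)
      = fun ω => ∑ j, θ j * ((A ω * X ω j) * (P ω j - ρ)) := by
    funext ω
    simp only [hB, Finset.mul_sum]
    exact Finset.sum_congr rfl fun k _ => by ring
  have intAB : Integrable (fun ω => A ω * B ω) μ := by
    rw [hABsum]
    exact integrable_finset_sum _ (fun j _ => (hAXQint j).const_mul _)
  have hB2sum : (fun ω => B ω ^ 2)
      = fun ω => ∑ i, ∑ j, (θ i * θ j) * ((X ω i * X ω j) * ((P ω i - ρ) * (P ω j - ρ))) := by
    funext ω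
    simp only [hB, sq, Finset.sum_mul_sum]
    exact Finset.sum_congr rfl fun i _ => Finset.sum_congr rfl fun j _ => by ring
  have intB2 : Integrable (fun ω => B ω ^ 2) μ := by
    rw [hB2sum]
    exact integrable_finset_sum _ fun i _ => integrable_finset_sum _ fun j _ => hXXQQint i j
  -- E[A B] = 0
  have hEAB : ∫ ω, A ω * B ω ∂μ = 0 := by
    rw [hABsum, integral_finset_sum _ (fun j _ => (hAXQint j).const_mul _)]
    refine Finset.sum_eq_zero fun j _ => ?_
    rw [integral_const_mul]
    have hf : Measurable (fun p : (Fin d → ℝ) × ℝ =>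
        (p.2 - ∑ k, (ρ * θ k) * p.1 k) * p.1 j) := by
      refine (measurable_snd.sub ?_).mul ((measurable_pi_apply j).comp measurable_fst)
      exact Finset.measurable_sum _ fun k _ =>
        ((measurable_pi_apply k).comp measurable_fst).const_mul _
    have hg : Measurable (fun p : Fin d → ℝ => p j - ρ) := (measurable_pi_apply (X := fun _ => ℝ) j).sub_const ρ
    have h := hsplit _ _ hf hg
    simp only at h
    rw [hA]
    simp only
    rw [h, hEQ j, mul_zero, mul_zero]
  -- E[B^2]
  have hEB2 : ∫ ω, B ω ^ 2 ∂μ = ρ * (1 - ρ) * ∑ j, θ j ^ 2 * ∫ ω, X ω j ^ 2 ∂μ := by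
    rw [hB2sum, integral_finset_sum _ (fun i _ => integrable_finset_sum _ fun j _ => hXXQQint i j)]
    have hinner : ∀ i : Fin d, (∫ ω, ∑ j, (θ i * θ j) * ((X ω i * X ω j) * ((P ω i - ρ) * (P ω j - ρ))) ∂μ)
        = ∑ j, ∫ ω, (θ i * θ j) * ((X ω i * X ω j) * ((P ω i - ρ) * (P ω j - ρ))) ∂μ :=
      fun i => integral_finset_sum _ (fun j _ => hXXQQint i j)
    have hterm : ∀ i j, ∫ ω, (θ i * θ j) * ((X ω i * X ω j) * ((P ω i - ρ) * (P ω j - ρ))) ∂μ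
        = (θ i * θ j) * ((∫ ω, X ω i * X ω j ∂μ) * ∫ ω, (P ω i - ρ) * (P ω j - ρ) ∂μ) := by
      intro i j
      rw [integral_const_mul]
      congr 1
      have hf : Measurable (fun p : (Fin d → ℝ) × ℝ => p.1 i * p.1 j) :=
        ((measurable_pi_apply i).comp measurable_fst).mul
          ((measurable_pi_apply j).comp measurable_fst)
      have hg : Measurable (fun p : Fin d → ℝ => (p i - ρ) * (p j - ρ)) :=
        ((measurable_pi_apply (X := fun _ => ℝ) i).sub_const ρ).mul ((measurable_pi_apply (X := fun _ => ℝ) j).sub_const ρ)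
      have h := hsplit _ _ hf hg
      simp only at h
      exact h
    have hrow : ∀ i : Fin d,
        (∑ j, ∫ ω, (θ i * θ j) * ((X ω i * X ω j) * ((P ω i - ρ) * (P ω j - ρ))) ∂μ)
        = θ i ^ 2 * ((∫ ω, X ω i ^ 2 ∂μ) * (ρ * (1 - ρ))) := by
      intro i
      rw [Finset.sum_eq_single_of_mem i (Finset.mem_univ i)]
      · rw [hterm i i]
        have h1 : ∫ ω, X ω i * X ω i ∂μ = ∫ ω, X ω i ^ 2 ∂μ := by
          congr 1; funext ω; ring
        have h2 : ∫ ω, (P ω i - ρ) * (P ω i - ρ) ∂μ = ρ * (1 - ρ) := by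
          rw [show (fun ω => (P ω i - ρ) * (P ω i - ρ)) = fun ω => (P ω i - ρ) ^ 2 by
            funext ω; ring]
          exact hEQ2 i
        rw [h1, h2]
        ring
      · intro j _ hji
        rw [hterm i j, hEQQ i j (Ne.symm hji), mul_zero, mul_zero]
    rw [Finset.sum_congr rfl fun i _ => (hinner i).trans (hrow i), Finset.mul_sum]
    exact Finset.sum_congr rfl fun i _ => by ring
  -- assemble
  have hptw : (fun ω => (Y ω - ∑ j, θ j * (P ω j * X ω j)) ^ 2)
      = fun ω => A ω ^ 2 - 2 * (A ω * B ω) + B ω ^ 2 := by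
    funext ω
    have h : Y ω - ∑ j, θ j * (P ω j * X ω j) = A ω - B ω := by
      simp only [hA, hB]
      rw [sub_sub, ← Finset.sum_add_distrib]
      congr 1
      exact Finset.sum_congr rfl fun k _ => by ring
    rw [h]; ring
  have int2AB : Integrable (fun ω => 2 * (A ω * B ω)) μ := intAB.const_mul 2
  have intsub : Integrable (fun ω => A ω ^ 2 - 2 * (A ω * B ω)) μ := intA2.sub int2AB
  rw [hptw, integral_add intsub intB2, integral_sub intA2 int2AB,
    integral_const_mul, hEAB, hEB2]
  simp only [hA]
  ring

theorem stmt6 {Ω : Type*} {mΩ : MeasurableSpace Ω} (μ : Measure Ω) [IsProbabilityMeasure μ]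
    {d : ℕ} (X : Ω → Fin d → ℝ) (Y : Ω → ℝ) (P : Ω → Fin d → ℝ)
    (hXm : Measurable X) (hYm : Measurable Y) (hPm : Measurable P)
    (hX2 : ∀ j, MemLp (fun ω => X ω j) 2 μ) (hY2 : MemLp Y 2 μ)
    (hP01 : ∀ ω j, P ω j = 0 ∨ P ω j = 1)
    (ρ : ℝ) (hρpos : 0 < ρ) (hρlt : ρ < 1)
    (hρ : ∀ j, (μ {ω | P ω j = 1}).toReal = ρ)
    (hiid : iIndepFun (fun j ω => P ω j) μ)
    (hMCAR : IndepFun (fun ω => (X ω, Y ω)) P μ)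
    (l L : ℝ)
    (hmom : ∀ j, l ^ 2 ≤ ∫ ω, X ω j ^ 2 ∂μ ∧ ∫ ω, X ω j ^ 2 ∂μ ≤ L ^ 2)
    (R Rimp : (Fin d → ℝ) → ℝ)
    (hR : ∀ θ, R θ = ∫ ω, (Y ω - ∑ j, θ j * X ω j) ^ 2 ∂μ)
    (hRimp : ∀ θ, Rimp θ = ∫ ω, (Y ω - ∑ j, θ j * (P ω j * X ω j)) ^ 2 ∂μ) :
    (⨅ θ : Fin d → ℝ, (R θ + (l ^ 2 * (1 - ρ) / ρ) * ∑ j, θ j ^ 2)) - (⨅ θ : Fin d → ℝ, R θ) ≤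
        (⨅ θ : Fin d → ℝ, Rimp θ) - (⨅ θ : Fin d → ℝ, R θ) ∧
      (⨅ θ : Fin d → ℝ, Rimp θ) - (⨅ θ : Fin d → ℝ, R θ) ≤
        (⨅ θ : Fin d → ℝ, (R θ + (L ^ 2 * (1 - ρ) / ρ) * ∑ j, θ j ^ 2)) -
          (⨅ θ : Fin d → ℝ, R θ) := by
  have key : ∀ θ : Fin d → ℝ, Rimp θ
      = R (fun j => ρ * θ j) + ρ * (1 - ρ) * ∑ j, θ j ^ 2 * ∫ ω, X ω j ^ 2 ∂μ := by
    intro θ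
    rw [hRimp, hR]
    exact key_aux μ X Y P hXm hYm hPm hX2 hY2 hP01 ρ hρpos hρlt hρ hiid hMCAR θ
  have hRnonneg : ∀ θ, 0 ≤ R θ := fun θ => by
    rw [hR]; exact integral_nonneg fun ω => sq_nonneg _
  have hRimpnonneg : ∀ θ, 0 ≤ Rimp θ := fun θ => by
    rw [hRimp]; exact integral_nonneg fun ω => sq_nonneg _
  have h1ρ : (0:ℝ) ≤ 1 - ρ := by linarith
  have hlam'nn : 0 ≤ l ^ 2 * (1 - ρ) / ρ := div_nonneg (mul_nonneg (sq_nonneg l) h1ρ) hρpos.le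
  have hbddLow : BddBelow (Set.range fun θ : Fin d → ℝ =>
      R θ + (l ^ 2 * (1 - ρ) / ρ) * ∑ j, θ j ^ 2) := by
    refine ⟨0, ?_⟩
    rintro x ⟨θ, rfl⟩
    have h1 : 0 ≤ (l ^ 2 * (1 - ρ) / ρ) * ∑ j, θ j ^ 2 :=
      mul_nonneg hlam'nn (Finset.sum_nonneg fun j _ => sq_nonneg _)
    have h2 := hRnonneg θ
    simp only
    linarith
  have hbddImp : BddBelow (Set.range Rimp) := ⟨0, by rintro x ⟨θ, rfl⟩; exact hRimpnonneg θ⟩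
  have hLow : ∀ θ : Fin d → ℝ,
      (⨅ θ' : Fin d → ℝ, (R θ' + (l ^ 2 * (1 - ρ) / ρ) * ∑ j, θ' j ^ 2)) ≤ Rimp θ := by
    intro θ
    have h0 := ciInf_le hbddLow (fun j => ρ * θ j)
    refine h0.trans ?_
    rw [key θ]
    have hle : (l ^ 2 * (1 - ρ) / ρ) * ∑ j, (ρ * θ j) ^ 2
        ≤ ρ * (1 - ρ) * ∑ j, θ j ^ 2 * ∫ ω, X ω j ^ 2 ∂μ := by
      rw [Finset.mul_sum, Finset.mul_sum]
      refine Finset.sum_le_sum fun j _ => ?_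
      have h1 : l ^ 2 * (1 - ρ) / ρ * (ρ * θ j) ^ 2 = l ^ 2 * ((1 - ρ) * ρ * θ j ^ 2) := by
        field_simp
      have h2 : ρ * (1 - ρ) * (θ j ^ 2 * ∫ ω, X ω j ^ 2 ∂μ)
          = (∫ ω, X ω j ^ 2 ∂μ) * ((1 - ρ) * ρ * θ j ^ 2) := by ring
      rw [h1, h2]
      exact mul_le_mul_of_nonneg_right (hmom j).1
        (mul_nonneg (mul_nonneg h1ρ hρpos.le) (sq_nonneg _))
    linarith
  have hUp : ∀ θ : Fin d → ℝ,
      (⨅ θ' : Fin d → ℝ, Rimp θ') ≤ R θ + (L ^ 2 * (1 - ρ) / ρ) * ∑ j, θ j ^ 2 := by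
    intro θ
    have h0 := ciInf_le hbddImp (fun j => θ j / ρ)
    refine h0.trans ?_
    rw [key]
    have hfun : (fun j => ρ * (θ j / ρ)) = θ := funext fun j => by
      field_simp
    rw [hfun]
    have hle : ρ * (1 - ρ) * ∑ j, (θ j / ρ) ^ 2 * ∫ ω, X ω j ^ 2 ∂μ
        ≤ (L ^ 2 * (1 - ρ) / ρ) * ∑ j, θ j ^ 2 := by
      rw [Finset.mul_sum, Finset.mul_sum]
      refine Finset.sum_le_sum fun j _ => ?_
      have h1 : ρ * (1 - ρ) * ((θ j / ρ) ^ 2 * ∫ ω, X ω j ^ 2 ∂μ)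
          = (∫ ω, X ω j ^ 2 ∂μ) * ((1 - ρ) / ρ * θ j ^ 2) := by
        field_simp
      have h2 : (L ^ 2 * (1 - ρ) / ρ) * θ j ^ 2 = L ^ 2 * ((1 - ρ) / ρ * θ j ^ 2) := by ring
      rw [h1, h2]
      exact mul_le_mul_of_nonneg_right (hmom j).2
        (mul_nonneg (div_nonneg h1ρ hρpos.le) (sq_nonneg _))
    linarith
  constructor
  · exact sub_le_sub_right (le_ciInf fun θ => hLow θ) _
  · exact sub_le_sub_right (le_ciInf fun θ => hUp θ) _
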